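/- Suppose x_1, ..., x_{d²}, y_1, ..., y_{d²} ∈ ℂ^d with each y_i a unit vector, such that for every X ∈ M_d(ℂ), (1/(d+1))·(X + tr(X)·I_d) = Σ_{i=1}^{d²} (x_i y_i*) X (x_i y_i*)*, and suppose the matrices {x_i y_i*}_{i=1}^{d²} are linearly independent in M_d(ℂ). Then for each 1 ≤ i ≤ d² there is a scalar λ_i ∈ ℂ with x_i = λ_i y_i, and consequently there exist d² unit vectors {w_i}_{i=1}^{d²} ⊆ ℂ^d with |⟨w_i, w_j⟩|² = 1/(d+1) for all i ≠ j. -/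

import Mathlib

open Matrix

/-- The rank-one matrix `x y*` with entries `(x y*)_{k,l} = x_k * conj (y_l)`. -/
noncomputable def outer {d : ℕ} (x y : Fin d → ℂ) : Matrix (Fin d) (Fin d) ℂ :=
  fun k l => x k * (starRingEnd ℂ) (y l)

/-- If `x_1, ..., x_{d²}, y_1, ..., y_{d²} ∈ ℂ^d` with each `y_i` a unit vector satisfy
`(1/(d+1))(X + tr(X) I_d) = ∑_i (x_i y_i*) X (x_i y_i*)*` for all `X`, and the matrices
`{x_i y_i*}` are linearly independent, then each `x_i` is a scalar multiple of `y_i`, and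
consequently there exist `d²` unit vectors `{w_i}` with `|⟨w_i, w_j⟩|² = 1/(d+1)` for
all `i ≠ j`. -/
lemma outer_conj {d : ℕ} (x y : Fin d → ℂ) (X : Matrix (Fin d) (Fin d) ℂ) :
    outer x y * X * (outer x y)ᴴ
      = (∑ p, ∑ q, (starRingEnd ℂ) (y p) * X p q * y q) • outer x x := by
  ext k l
  simp only [Matrix.mul_apply, outer, conjTranspose_apply, Matrix.smul_apply, smul_eq_mul,
    _root_.map_mul, RingHomCompTriple.comp_apply, RingHom.id_apply, Finset.sum_mul,
    Finset.mul_sum]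
  rw [Finset.sum_comm]
  apply Finset.sum_congr rfl; intro q _
  apply Finset.sum_congr rfl; intro p _
  simp [starRingEnd_self_apply]
  ring

noncomputable def cf {d : ℕ} (y : Fin d → ℂ) (X : Matrix (Fin d) (Fin d) ℂ) : ℂ :=
  ∑ p, ∑ q, (starRingEnd ℂ) (y p) * X p q * y q

lemma cf_one {d : ℕ} (y : EuclideanSpace ℂ (Fin d)) (hy : ‖y‖ = 1) :
    cf y (1 : Matrix (Fin d) (Fin d) ℂ) = 1 := by
  have h : (∑ p, (starRingEnd ℂ) (y p) * y p) = inner ℂ y y := by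
    rw [PiLp.inner_apply]; exact Finset.sum_congr rfl fun k _ => by rw [RCLike.inner_apply]; ring
  have h2 : (inner ℂ y y : ℂ) = (1:ℂ) := by
    rw [inner_self_eq_norm_sq_to_K, hy]; norm_num
  calc cf y 1 = ∑ p, (starRingEnd ℂ) (y p) * y p := by
        unfold cf
        apply Finset.sum_congr rfl; intro p _
        rw [Finset.sum_eq_single p]
        · simp
        · intro q _ hq; simp [Matrix.one_apply_ne (Ne.symm hq)]
        · simp
    _ = 1 := by rw [h, h2]

lemma cf_smul {d : ℕ} (y : Fin d → ℂ) (a : ℂ) (X : Matrix (Fin d) (Fin d) ℂ) :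
    cf y (a • X) = a * cf y X := by
  unfold cf
  simp only [Matrix.smul_apply, smul_eq_mul, Finset.mul_sum]
  apply Finset.sum_congr rfl; intro p _
  apply Finset.sum_congr rfl; intro q _
  ring

lemma cf_sub {d : ℕ} (y : Fin d → ℂ) (X Y : Matrix (Fin d) (Fin d) ℂ) :
    cf y (X - Y) = cf y X - cf y Y := by
  unfold cf
  rw [← Finset.sum_sub_distrib]
  apply Finset.sum_congr rfl; intro p _
  rw [← Finset.sum_sub_distrib]
  apply Finset.sum_congr rfl; intro q _
  simp [Matrix.sub_apply]; ring

lemma cf_outer {d : ℕ} (y u v : Fin d → ℂ) :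
    cf y (outer u v)
      = (∑ p, (starRingEnd ℂ) (y p) * u p) * (∑ q, (starRingEnd ℂ) (v q) * y q) := by
  unfold cf outer
  rw [Finset.sum_mul]
  apply Finset.sum_congr rfl; intro p _
  rw [Finset.mul_sum]
  apply Finset.sum_congr rfl; intro q _
  ring

lemma inner_eq_sum {d : ℕ} (a b : EuclideanSpace ℂ (Fin d)) :
    (inner ℂ a b : ℂ) = ∑ k, (starRingEnd ℂ) (a k) * b k := by
  rw [PiLp.inner_apply]; exact Finset.sum_congr rfl fun k _ => by simp [mul_comm]

lemma cf_outer_self {d : ℕ} (yi xj : EuclideanSpace ℂ (Fin d)) :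
    cf yi (outer xj xj) = ((‖(inner ℂ yi xj : ℂ)‖ ^ 2 : ℝ) : ℂ) := by
  rw [cf_outer]
  have h1 : (∑ p, (starRingEnd ℂ) (yi p) * xj p) = (inner ℂ yi xj : ℂ) := (inner_eq_sum yi xj).symm
  have h2 : (∑ q, (starRingEnd ℂ) (xj q) * yi q) = (inner ℂ xj yi : ℂ) := (inner_eq_sum xj yi).symm
  rw [h1, h2, ← inner_conj_symm yi xj, RCLike.conj_mul]
  simp only [RCLike.norm_conj]
  norm_cast

lemma trace_outer {d : ℕ} (xj : EuclideanSpace ℂ (Fin d)) :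
    (outer xj xj).trace = ((‖xj‖ ^ 2 : ℝ) : ℂ) := by
  have : (outer xj xj).trace = ∑ k, xj k * (starRingEnd ℂ) (xj k) := rfl
  rw [this]
  have h : ∑ k, xj k * (starRingEnd ℂ) (xj k) = ∑ k, (starRingEnd ℂ) (xj k) * xj k := by
    apply Finset.sum_congr rfl; intro k _; ring
  rw [h, ← inner_eq_sum xj xj, inner_self_eq_norm_sq_to_K]
  norm_cast


theorem rank_one_kraus_gives_sic {d : ℕ} (hd : 2 ≤ d)
    (x y : Fin (d ^ 2) → EuclideanSpace ℂ (Fin d))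
    (hy : ∀ i, ‖y i‖ = 1)
    (hrep : ∀ X : Matrix (Fin d) (Fin d) ℂ,
      ((d : ℂ) + 1)⁻¹ • (X + X.trace • (1 : Matrix (Fin d) (Fin d) ℂ)) =
        ∑ i, outer (x i) (y i) * X * (outer (x i) (y i))ᴴ)
    (hli : LinearIndependent ℂ fun i => outer (x i) (y i)) :
    (∀ i, ∃ lam : ℂ, x i = lam • y i) ∧
    ∃ w : Fin (d ^ 2) → EuclideanSpace ℂ (Fin d),
      (∀ i, ‖w i‖ = 1) ∧
      (∀ i j, i ≠ j → ‖(inner ℂ (w i) (w j) : ℂ)‖ ^ 2 = 1 / (d + 1)) := by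
  have hd0 : (0:ℝ) < d := by exact_mod_cast lt_of_lt_of_le Nat.zero_lt_two hd
  have hdc : ((d:ℂ) + 1) ≠ 0 := by
    intro h
    have : ((d:ℝ) + 1) = 0 := by exact_mod_cast h
    linarith
  set B : Fin (d ^ 2) → Matrix (Fin d) (Fin d) ℂ := fun i => outer (x i) (x i) with hB
  have hrep' : ∀ X : Matrix (Fin d) (Fin d) ℂ,
      ((d : ℂ) + 1)⁻¹ • (X + X.trace • 1) = ∑ i, cf (y i) X • B i := by
    intro X
    rw [hrep X]
    apply Finset.sum_congr rfl; intro i _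
    rw [outer_conj]
    rfl
  have htr1 : (1 : Matrix (Fin d) (Fin d) ℂ).trace = (d : ℂ) := by
    simp [Matrix.trace_one]
  -- representation of arbitrary M in terms of B
  have hrepM : ∀ M : Matrix (Fin d) (Fin d) ℂ,
      M = ∑ i, (((d:ℂ) + 1) * cf (y i) M - M.trace) • B i := by
    intro M
    have h := hrep' (((d:ℂ) + 1) • M - M.trace • 1)
    have htr : ((((d:ℂ) + 1) • M - M.trace • 1)).trace = M.trace := by
      rw [Matrix.trace_sub, Matrix.trace_smul, Matrix.trace_smul, htr1]
      simp only [smul_eq_mul]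
      ring
    rw [htr] at h
    have hL : ((d:ℂ) + 1)⁻¹ • (((((d:ℂ) + 1) • M - M.trace • 1)) + M.trace • 1) = M := by
      rw [sub_add_cancel, smul_smul, inv_mul_cancel₀ hdc, one_smul]
    rw [hL] at h
    calc M = ∑ i, cf (y i) (((d:ℂ) + 1) • M - M.trace • 1) • B i := h
      _ = ∑ i, (((d:ℂ) + 1) * cf (y i) M - M.trace) • B i := by
          apply Finset.sum_congr rfl; intro i _
          congr 1
          rw [cf_sub, cf_smul, cf_smul, cf_one _ (hy i)]
          ring
  -- sum of B i is the identity
  have hsum1 : ∑ i, B i = (1 : Matrix (Fin d) (Fin d) ℂ) := by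
    have h := hrep' 1
    rw [htr1] at h
    have hL : ((d:ℂ) + 1)⁻¹ • ((1 : Matrix (Fin d) (Fin d) ℂ) + (d:ℂ) • 1)
        = (1 : Matrix (Fin d) (Fin d) ℂ) := by
      have : (1 : Matrix (Fin d) (Fin d) ℂ) + (d:ℂ) • 1 = ((d:ℂ) + 1) • 1 := by
        rw [add_smul, one_smul]; abel
      rw [this, smul_smul, inv_mul_cancel₀ hdc, one_smul]
    rw [hL] at h
    rw [h]
    apply Finset.sum_congr rfl; intro i _
    rw [cf_one _ (hy i), one_smul]
  -- B is linearly independent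
  have hBspan : ⊤ ≤ Submodule.span ℂ (Set.range B) := by
    intro M _
    rw [hrepM M]
    exact Submodule.sum_mem _ fun i _ =>
      Submodule.smul_mem _ _ (Submodule.subset_span (Set.mem_range_self i))
  have hBli : LinearIndependent ℂ B := by
    apply linearIndependent_of_top_le_span_of_card_eq_finrank hBspan
    rw [Module.finrank_matrix]
    simp [pow_two]
  -- key coefficient identity
  have key : ∀ i j, ((d:ℂ) + 1) * cf (y i) (B j) - (B j).trace
      = if i = j then (1:ℂ) else 0 := by
    intro i j
    have h1 := hrepM (B j)
    have h2 : B j = ∑ i, (if i = j then (1:ℂ) else 0) • B i := by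
      simp [ite_smul]
    have h3 : ∑ i, ((((d:ℂ) + 1) * cf (y i) (B j) - (B j).trace)
        - if i = j then (1:ℂ) else 0) • B i = 0 := by
      calc ∑ i, ((((d:ℂ) + 1) * cf (y i) (B j) - (B j).trace)
            - if i = j then (1:ℂ) else 0) • B i
          = ∑ i, (((((d:ℂ) + 1) * cf (y i) (B j) - (B j).trace)) • B i
            - (if i = j then (1:ℂ) else 0) • B i) := by
            apply Finset.sum_congr rfl; intro i _; rw [sub_smul]
        _ = ∑ i, (((d:ℂ) + 1) * cf (y i) (B j) - (B j).trace) • B i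
            - ∑ i, (if i = j then (1:ℂ) else 0) • B i := Finset.sum_sub_distrib _ _
        _ = 0 := by rw [← h1, ← h2, sub_self]
    have h4 := Fintype.linearIndependent_iff.mp hBli _ h3 i
    exact sub_eq_zero.mp h4
  -- real form of the key identity
  have keyR : ∀ i j, ((d:ℝ) + 1) * ‖(inner ℂ (y i) (x j) : ℂ)‖ ^ 2
      = ‖x j‖ ^ 2 + (if i = j then (1:ℝ) else 0) := by
    intro i j
    have h := key i j
    rw [show B j = outer (x j) (x j) from rfl, cf_outer_self (y i) (x j),
      trace_outer (x j)] at h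
    by_cases hij : i = j
    · rw [if_pos hij] at h ⊢
      have h' : ((d:ℂ) + 1) * ((‖(inner ℂ (y i) (x j) : ℂ)‖ ^ 2 : ℝ) : ℂ)
          = ((‖x j‖ ^ 2 : ℝ) : ℂ) + 1 := by linear_combination h
      exact_mod_cast h'
    · rw [if_neg hij] at h ⊢
      rw [add_zero]
      have h' : ((d:ℂ) + 1) * ((‖(inner ℂ (y i) (x j) : ℂ)‖ ^ 2 : ℝ) : ℂ)
          = ((‖x j‖ ^ 2 : ℝ) : ℂ) := by linear_combination h
      exact_mod_cast h'
  -- sum of squared norms is d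
  have hsumnorm : ∑ i, ‖x i‖ ^ 2 = (d:ℝ) := by
    have h := congrArg Matrix.trace hsum1
    rw [Matrix.trace_sum, htr1] at h
    have h2 : ∑ i, ((‖x i‖ ^ 2 : ℝ) : ℂ) = (d : ℂ) := by
      rw [← h]
      apply Finset.sum_congr rfl; intro i _
      exact (trace_outer (x i)).symm
    have h3 : ((∑ i, ‖x i‖ ^ 2 : ℝ) : ℂ) = ((d : ℝ) : ℂ) := by push_cast; push_cast at h2; exact h2
    exact_mod_cast h3
  -- lower bound on norms
  have hxlow : ∀ j, 1 / (d:ℝ) ≤ ‖x j‖ ^ 2 := by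
    intro j
    have hcs : ‖(inner ℂ (y j) (x j) : ℂ)‖ ≤ ‖x j‖ := by
      have := norm_inner_le_norm (𝕜 := ℂ) (y j) (x j)
      rwa [hy j, one_mul] at this
    have hcs2 : ‖(inner ℂ (y j) (x j) : ℂ)‖ ^ 2 ≤ ‖x j‖ ^ 2 :=
      pow_le_pow_left₀ (norm_nonneg _) hcs 2
    have hk := keyR j j
    rw [if_pos rfl] at hk
    rw [div_le_iff₀ hd0]
    nlinarith [hk, hcs2]
  -- all norms equal 1/d
  have hxnorm : ∀ j, ‖x j‖ ^ 2 = 1 / (d:ℝ) := by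
    have hconst : ∑ _i : Fin (d ^ 2), (1 / (d:ℝ)) = (d:ℝ) := by
      rw [Finset.sum_const, Finset.card_univ, Fintype.card_fin, nsmul_eq_mul]
      push_cast
      field_simp
    have hzero : ∑ i, (‖x i‖ ^ 2 - 1 / (d:ℝ)) = 0 := by
      rw [Finset.sum_sub_distrib, hsumnorm, hconst, sub_self]
    intro j
    have := (Finset.sum_eq_zero_iff_of_nonneg
      (fun i _ => by have := hxlow i; linarith)).mp hzero j (Finset.mem_univ j)
    linarith
  -- each x j is a nonzero multiple of y j
  have part1 : ∀ j, ∃ r : ℂ, r ≠ 0 ∧ x j = r • y j := by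
    intro j
    have hy0 : y j ≠ 0 := by
      intro h0; have := hy j; rw [h0, norm_zero] at this; norm_num at this
    have hx0 : x j ≠ 0 := by
      intro h0
      have h1 := hxnorm j
      rw [h0, norm_zero] at h1
      have h2 : (0:ℝ) < 1 / d := by positivity
      rw [← h1] at h2
      norm_num at h2
    have hk := keyR j j
    rw [if_pos rfl, hxnorm j] at hk
    have hs2 : ‖(inner ℂ (y j) (x j) : ℂ)‖ ^ 2 = ‖x j‖ ^ 2 := by
      rw [hxnorm j]
      have hd1 : (d:ℝ) + 1 ≠ 0 := by linarith
      have hmul : ((d:ℝ) + 1) * ‖(inner ℂ (y j) (x j) : ℂ)‖ ^ 2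
          = ((d:ℝ) + 1) * (1 / d) := by
        rw [hk]; field_simp; ring
      exact mul_left_cancel₀ hd1 hmul
    have hs : ‖(inner ℂ (y j) (x j) : ℂ)‖ = ‖y j‖ * ‖x j‖ := by
      rw [hy j, one_mul]
      exact (pow_left_inj₀ (norm_nonneg _) (norm_nonneg _) two_ne_zero).mp hs2
    exact (norm_inner_eq_norm_iff hy0 hx0).mp hs
  refine ⟨fun i => ⟨(part1 i).choose, (part1 i).choose_spec.2⟩, y, hy, ?_⟩
  intro i j hij
  obtain ⟨r, hr0, hxr⟩ := part1 j
  have hnr : ‖r‖ ^ 2 = 1 / (d:ℝ) := by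
    have := hxnorm j
    rw [hxr, norm_smul, hy j, mul_one] at this
    exact this
  have hk := keyR i j
  rw [if_neg hij, add_zero, hxnorm j] at hk
  have hinner : (inner ℂ (y i) (x j) : ℂ) = r * inner ℂ (y i) (y j) := by
    rw [hxr, inner_smul_right]
  rw [hinner, norm_mul, mul_pow, hnr] at hk
  have hd1 : (d:ℝ) + 1 ≠ 0 := by linarith
  have hdne : (d:ℝ) ≠ 0 := by linarith
  field_simp at hk ⊢
  linarith
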